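/- Let λ > 0 and δ > 0 with λ < δ, set ρ = −λ/δ ∈ (−1,0), and let p(x,y) denote the density of the centered bivariate normal distribution on ℝ² with covariance matrix [[1, −λ], [−λ, δ²]]. Then for every u ∈ ℝ, ( ∫_{ℝ²} y · 1_{y<0} · 1_{x>u} · p(x,y) dx dy ) / ( ∫_{ℝ²} y · 1_{y<0} · p(x,y) dx dy ) = Ψ(u/√(1−ρ²)) − √(2π) · ρ · φ(u) · Φ(−ρu/√(1−ρ²)). (This is the exact peak height distribution formula for a smooth unit-variance nonstationary Gaussian process, where (x,y) plays the role of (X(t), X''(t)) conditionally on X'(t)=0 and ρ is the conditional correlation of X(t) and X''(t) given X'(t)=0.) -/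

import Mathlib

open MeasureTheory Real Matrix

/-- The standard normal pdf. -/
noncomputable def stdPdf (x : ℝ) : ℝ := (Real.sqrt (2 * Real.pi))⁻¹ * Real.exp (-x ^ 2 / 2)

/-- The standard normal cdf. -/
noncomputable def stdCdf (x : ℝ) : ℝ := ∫ s in Set.Iio x, stdPdf s

/-- The standard normal tail probability. -/
noncomputable def stdTail (x : ℝ) : ℝ := 1 - stdCdf x

/-- Density of the centered bivariate normal distribution with covariance matrix Σ. -/
noncomputable def binormDensity (S : Matrix (Fin 2) (Fin 2) ℝ) (x y : ℝ) : ℝ :=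
  (2 * Real.pi)⁻¹ * (Real.sqrt S.det)⁻¹ *
    Real.exp (-(![x, y] ⬝ᵥ S⁻¹.mulVec ![x, y]) / 2)

open Filter Topology Set

lemma sqrt2pi_pos : 0 < Real.sqrt (2 * Real.pi) := Real.sqrt_pos.2 (by positivity)

lemma stdPdf_pos (x : ℝ) : 0 < stdPdf x := by
  unfold stdPdf; positivity

lemma stdPdf_le (x : ℝ) : stdPdf x ≤ (Real.sqrt (2 * Real.pi))⁻¹ := by
  unfold stdPdf
  nth_rewrite 2 [← mul_one ((Real.sqrt (2 * Real.pi))⁻¹)]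
  have h1 : Real.exp (-x ^ 2 / 2) ≤ 1 := Real.exp_le_one_iff.2 (by nlinarith [sq_nonneg x])
  have h2 : (0:ℝ) < (Real.sqrt (2 * Real.pi))⁻¹ := by positivity
  nlinarith [Real.exp_pos (-x ^ 2 / 2)]

lemma continuous_stdPdf : Continuous stdPdf := by
  unfold stdPdf; continuity

lemma stdPdf_eq' : stdPdf = fun x => (Real.sqrt (2 * Real.pi))⁻¹ * Real.exp (-(1/2) * x ^ 2) := by
  funext x; unfold stdPdf; ring_nf

lemma integrable_stdPdf : Integrable stdPdf := by
  rw [stdPdf_eq']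
  exact (integrable_exp_neg_mul_sq (by norm_num)).const_mul _

lemma integral_stdPdf : ∫ x, stdPdf x = 1 := by
  rw [stdPdf_eq']
  rw [integral_const_mul, integral_gaussian]
  rw [show Real.pi / (1/2) = 2 * Real.pi by ring]
  exact inv_mul_cancel₀ (ne_of_gt sqrt2pi_pos)

lemma integrable_mul_stdPdf : Integrable (fun x => x * stdPdf x) := by
  rw [stdPdf_eq']
  have := (integrable_mul_exp_neg_mul_sq (b := 1/2) (by norm_num)).const_mul
    ((Real.sqrt (2 * Real.pi))⁻¹)
  convert this using 2 with x
  ring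

lemma integrable_abs_mul_stdPdf : Integrable (fun x => |x| * stdPdf x) := by
  have := integrable_mul_stdPdf.abs
  convert this using 2 with x
  rw [abs_mul, abs_of_pos (stdPdf_pos x)]

lemma hasDerivAt_stdPdf (x : ℝ) : HasDerivAt stdPdf (-x * stdPdf x) x := by
  unfold stdPdf
  have h1 : HasDerivAt (fun x : ℝ => -x ^ 2 / 2) (-x) x := by
    have := ((hasDerivAt_pow 2 x).neg).div_const 2
    refine this.congr_deriv ?_
    simp; ring
  have := (h1.exp).const_mul ((Real.sqrt (2 * Real.pi))⁻¹)
  refine this.congr_deriv ?_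
  ring

lemma stdPdf_tendsto_atTop : Tendsto stdPdf atTop (𝓝 0) := by
  rw [stdPdf_eq']
  rw [show (0:ℝ) = (Real.sqrt (2 * Real.pi))⁻¹ * 0 by ring]
  apply Tendsto.const_mul
  apply Real.tendsto_exp_atBot.comp
  have : Tendsto (fun x : ℝ => x ^ 2) atTop atTop := tendsto_pow_atTop (by norm_num)
  exact this.const_mul_atTop_of_neg (r := -(1/2)) (by norm_num)

lemma stdPdf_tendsto_atBot : Tendsto stdPdf atBot (𝓝 0) := by
  have heven : ∀ x : ℝ, stdPdf (-x) = stdPdf x := by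
    intro x; unfold stdPdf; rw [neg_pow]; norm_num
  have := stdPdf_tendsto_atTop.comp tendsto_neg_atBot_atTop
  refine this.congr fun x => ?_
  simp only [Function.comp_apply]
  exact heven x

lemma stdCdf_eq_Iic (x : ℝ) : stdCdf x = ∫ s in Iic x, stdPdf s :=
  (integral_Iic_eq_integral_Iio).symm

lemma stdCdf_nonneg (x : ℝ) : 0 ≤ stdCdf x :=
  setIntegral_nonneg measurableSet_Iio (fun s _ => (stdPdf_pos s).le)

lemma stdCdf_le_one (x : ℝ) : stdCdf x ≤ 1 := by
  rw [← integral_stdPdf]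
  exact setIntegral_le_integral integrable_stdPdf (ae_of_all _ fun s => (stdPdf_pos s).le)

lemma hasDerivAt_stdCdf (x : ℝ) : HasDerivAt stdCdf (stdPdf x) x := by
  have key : stdCdf = fun y => stdCdf 0 + ∫ t in (0:ℝ)..y, stdPdf t := by
    funext y
    rw [stdCdf_eq_Iic, stdCdf_eq_Iic,
      ← intervalIntegral.integral_Iic_sub_Iic integrable_stdPdf.integrableOn
        integrable_stdPdf.integrableOn]
    ring
  rw [key]
  have h := intervalIntegral.integral_hasDerivAt_right
    (integrable_stdPdf.intervalIntegrable (a := 0) (b := x))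
    (continuous_stdPdf.stronglyMeasurableAtFilter volume (𝓝 x))
    continuous_stdPdf.continuousAt
  exact h.const_add (stdCdf 0)

lemma continuous_stdCdf : Continuous stdCdf :=
  continuous_iff_continuousAt.2 fun x => (hasDerivAt_stdCdf x).continuousAt

lemma stdPdf_le_exp (s : ℝ) :
    stdPdf s ≤ (Real.sqrt (2 * Real.pi))⁻¹ * Real.exp (1/2) * Real.exp s := by
  unfold stdPdf
  rw [mul_assoc, ← Real.exp_add]
  have h2 : (0:ℝ) < (Real.sqrt (2 * Real.pi))⁻¹ := by positivity
  have : Real.exp (-s ^ 2 / 2) ≤ Real.exp (1/2 + s) :=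
    Real.exp_le_exp.2 (by nlinarith [sq_nonneg (s+1)])
  nlinarith [Real.exp_pos (-s ^ 2 / 2)]

lemma stdPdf_le_exp_neg (s : ℝ) :
    stdPdf s ≤ (Real.sqrt (2 * Real.pi))⁻¹ * Real.exp (1/2) * Real.exp (-s) := by
  unfold stdPdf
  rw [mul_assoc, ← Real.exp_add]
  have h2 : (0:ℝ) < (Real.sqrt (2 * Real.pi))⁻¹ := by positivity
  have : Real.exp (-s ^ 2 / 2) ≤ Real.exp (1/2 + -s) :=
    Real.exp_le_exp.2 (by nlinarith [sq_nonneg (s-1)])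
  nlinarith [Real.exp_pos (-s ^ 2 / 2)]

lemma stdCdf_tendsto_atBot : Tendsto stdCdf atBot (𝓝 0) := by
  set C := (Real.sqrt (2 * Real.pi))⁻¹ * Real.exp (1/2) with hC
  have hCpos : 0 < C := by positivity
  have hub : ∀ x : ℝ, stdCdf x ≤ C * Real.exp x := by
    intro x
    rw [stdCdf_eq_Iic]
    calc ∫ s in Iic x, stdPdf s ≤ ∫ s in Iic x, C * Real.exp s := by
          apply setIntegral_mono_on integrable_stdPdf.integrableOn
            ((integrableOn_exp_Iic x).const_mul C)
            measurableSet_Iic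
          intro s _
          exact stdPdf_le_exp s
      _ = C * Real.exp x := by rw [MeasureTheory.integral_const_mul, integral_exp_Iic]
  have hlb : ∀ x : ℝ, (0:ℝ) ≤ stdCdf x := stdCdf_nonneg
  have h1 : Tendsto (fun x : ℝ => C * Real.exp x) atBot (𝓝 0) := by
    rw [show (0:ℝ) = C * 0 by ring]
    exact Real.tendsto_exp_atBot.const_mul C
  exact tendsto_of_tendsto_of_tendsto_of_le_of_le tendsto_const_nhds h1 hlb hub

lemma stdTail_eq (x : ℝ) : stdTail x = ∫ s in Ioi x, stdPdf s := by
  have := intervalIntegral.integral_Iio_add_Ici (b := x) integrable_stdPdf.integrableOn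
    integrable_stdPdf.integrableOn
  rw [integral_stdPdf] at this
  unfold stdTail stdCdf
  rw [← integral_Ici_eq_integral_Ioi]
  linarith

lemma stdCdf_tendsto_atTop : Tendsto stdCdf atTop (𝓝 1) := by
  set C := (Real.sqrt (2 * Real.pi))⁻¹ * Real.exp (1/2) with hC
  have hCpos : 0 < C := by positivity
  have htail : ∀ x : ℝ, stdTail x ≤ C * Real.exp (-x) := by
    intro x
    rw [stdTail_eq]
    have hint : IntegrableOn (fun s => C * Real.exp (-s)) (Ioi x) := by
      apply Integrable.const_mul
      exact (exp_neg_integrableOn_Ioi x (by norm_num : (0:ℝ) < 1)).congr_fun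
        (fun s _ => by norm_num) measurableSet_Ioi
    calc ∫ s in Ioi x, stdPdf s ≤ ∫ s in Ioi x, C * Real.exp (-s) := by
          apply setIntegral_mono_on integrable_stdPdf.integrableOn hint measurableSet_Ioi
          intro s _
          exact stdPdf_le_exp_neg s
      _ = C * Real.exp (-x) := by rw [MeasureTheory.integral_const_mul, integral_exp_neg_Ioi]
  have htail0 : ∀ x : ℝ, (0:ℝ) ≤ stdTail x := by
    intro x
    rw [stdTail_eq]
    exact setIntegral_nonneg measurableSet_Ioi (fun s _ => (stdPdf_pos s).le)
  have h1 : Tendsto stdTail atTop (𝓝 0) := by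
    apply tendsto_of_tendsto_of_tendsto_of_le_of_le tendsto_const_nhds _ htail0 htail
    rw [show (0:ℝ) = C * 0 by ring]
    exact (Real.tendsto_exp_atBot.comp tendsto_neg_atTop_atBot).const_mul C
  have : stdCdf = fun x => 1 - stdTail x := by funext x; unfold stdTail; ring
  rw [this]
  have := Filter.Tendsto.const_sub 1 h1
  simpa using this

lemma integrable_comp_affine {k : ℝ → ℝ} (hk : Integrable k) (a : ℝ) {τ : ℝ} (hτ : τ ≠ 0) :
    Integrable (fun y : ℝ => k ((y + a) / τ)) :=
  (hk.comp_div hτ).comp_add_right a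

lemma integrable_mul_comp_affine (a : ℝ) {τ : ℝ} (hτ : 0 < τ) :
    Integrable (fun y : ℝ => y * stdPdf ((y + a) / τ)) := by
  have hk : Integrable (fun z : ℝ => (τ * z - a) * stdPdf z) := by
    have h := ((integrable_mul_stdPdf).const_mul τ).sub (integrable_stdPdf.const_mul a)
    refine h.congr (ae_of_all _ fun z => ?_)
    simp only [Pi.sub_apply]
    ring
  have h2 := integrable_comp_affine hk a hτ.ne'
  refine h2.congr (ae_of_all _ fun y => ?_)
  simp only
  rw [show τ * ((y + a) / τ) - a = y by field_simp; ring]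

lemma inner_integral (a : ℝ) {τ : ℝ} (hτ : 0 < τ) :
    ∫ y in Iic (0:ℝ), y * (τ⁻¹ * stdPdf ((y + a) / τ)) =
      -(τ * stdPdf (a / τ)) - a * stdCdf (a / τ) := by
  have hderiv : ∀ y ∈ Iic (0:ℝ), HasDerivAt
      (fun y => -(τ * stdPdf ((y + a) / τ)) - a * stdCdf ((y + a) / τ))
      (y * (τ⁻¹ * stdPdf ((y + a) / τ))) y := by
    intro y _
    have hw : HasDerivAt (fun y : ℝ => (y + a) / τ) τ⁻¹ y := by
      simpa using ((hasDerivAt_id y).add_const a).div_const τ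
    have h1 : HasDerivAt (fun y : ℝ => stdPdf ((y + a) / τ))
        (-((y + a) / τ) * stdPdf ((y + a) / τ) * τ⁻¹) y :=
      (hasDerivAt_stdPdf _).comp y hw
    have h2 : HasDerivAt (fun y : ℝ => stdCdf ((y + a) / τ))
        (stdPdf ((y + a) / τ) * τ⁻¹) y := (hasDerivAt_stdCdf _).comp y hw
    have h3 := ((h1.const_mul τ).neg).sub (h2.const_mul a)
    refine h3.congr_deriv ?_
    field_simp
    ring
  have hint : IntegrableOn (fun y => y * (τ⁻¹ * stdPdf ((y + a) / τ))) (Iic 0) := by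
    have h := (integrable_mul_comp_affine a hτ).const_mul τ⁻¹
    exact (h.congr (ae_of_all _ fun y => by simp only; ring)).integrableOn
  have htend : Tendsto (fun y => -(τ * stdPdf ((y + a) / τ)) - a * stdCdf ((y + a) / τ))
      atBot (𝓝 0) := by
    have hw : Tendsto (fun y : ℝ => (y + a) / τ) atBot atBot := by
      apply Tendsto.atBot_div_const hτ
      exact tendsto_atBot_add_const_right _ a tendsto_id
    have h := ((stdPdf_tendsto_atBot.comp hw).const_mul τ).neg.sub
      ((stdCdf_tendsto_atBot.comp hw).const_mul a)
    simpa using h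
  rw [integral_Iic_of_hasDerivAt_of_tendsto' hderiv hint htend]
  norm_num

lemma stdPdf_mul_stdPdf {lam τ δ : ℝ} (hτ : τ ≠ 0) (hδτ : δ ^ 2 = lam ^ 2 + τ ^ 2) (x : ℝ) :
    stdPdf x * stdPdf (lam * x / τ) = (Real.sqrt (2 * Real.pi))⁻¹ * stdPdf (δ * x / τ) := by
  unfold stdPdf
  have h : Real.exp (-x ^ 2 / 2) * Real.exp (-(lam * x / τ) ^ 2 / 2) =
      Real.exp (-(δ * x / τ) ^ 2 / 2) := by
    rw [← Real.exp_add]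
    congr 1
    field_simp
    linear_combination x ^ 2 * hδτ
  calc (Real.sqrt (2 * Real.pi))⁻¹ * Real.exp (-x ^ 2 / 2) *
        ((Real.sqrt (2 * Real.pi))⁻¹ * Real.exp (-(lam * x / τ) ^ 2 / 2))
      = (Real.sqrt (2 * Real.pi))⁻¹ * ((Real.sqrt (2 * Real.pi))⁻¹ *
        (Real.exp (-x ^ 2 / 2) * Real.exp (-(lam * x / τ) ^ 2 / 2))) := by ring
    _ = _ := by rw [h]

attribute [continuity, fun_prop] continuous_stdPdf continuous_stdCdf

noncomputable def Faux (lam τ x : ℝ) : ℝ :=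
  -(τ * stdPdf (lam * x / τ)) - lam * x * stdCdf (lam * x / τ)

noncomputable def Haux (lam τ δ x : ℝ) : ℝ :=
  lam * stdPdf x * stdCdf (lam * x / τ) - δ / Real.sqrt (2 * Real.pi) * stdCdf (δ * x / τ)

lemma hasDerivAt_Haux {lam τ δ : ℝ} (hτ : 0 < τ) (hδτ : δ ^ 2 = lam ^ 2 + τ ^ 2) (x : ℝ) :
    HasDerivAt (Haux lam τ δ) (stdPdf x * Faux lam τ x) x := by
  have hw1 : HasDerivAt (fun x : ℝ => lam * x / τ) (lam / τ) x := by
    simpa using ((hasDerivAt_id x).const_mul lam).div_const τ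
  have hw2 : HasDerivAt (fun x : ℝ => δ * x / τ) (δ / τ) x := by
    simpa using ((hasDerivAt_id x).const_mul δ).div_const τ
  have h1 : HasDerivAt (fun x : ℝ => lam * stdPdf x) (lam * (-x * stdPdf x)) x :=
    (hasDerivAt_stdPdf x).const_mul lam
  have h2 : HasDerivAt (fun x : ℝ => stdCdf (lam * x / τ)) (stdPdf (lam * x / τ) * (lam / τ)) x :=
    (hasDerivAt_stdCdf _).comp x hw1
  have h3 : HasDerivAt (fun x : ℝ => stdCdf (δ * x / τ)) (stdPdf (δ * x / τ) * (δ / τ)) x :=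
    (hasDerivAt_stdCdf _).comp x hw2
  have h := (h1.mul h2).sub ((h3.const_mul (δ / Real.sqrt (2 * Real.pi))))
  have hk : Real.sqrt 2 * Real.sqrt Real.pi * (stdPdf x * stdPdf (lam * x / τ)) =
      stdPdf (δ * x / τ) := by
    rw [stdPdf_mul_stdPdf hτ.ne' hδτ x, ← Real.sqrt_mul (by norm_num : (0:ℝ) ≤ 2)]
    field_simp
  have hs : Real.sqrt (2 * Real.pi) ≠ 0 := sqrt2pi_pos.ne'
  have hval : lam * (-x * stdPdf x) * stdCdf (lam * x / τ) +
      lam * stdPdf x * (stdPdf (lam * x / τ) * (lam / τ)) -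
      δ / Real.sqrt (2 * Real.pi) * (stdPdf (δ * x / τ) * (δ / τ)) =
      stdPdf x * Faux lam τ x := by
    have hk2 : Real.sqrt (2 * Real.pi) * (stdPdf x * stdPdf (lam * x / τ)) =
        stdPdf (x * δ / τ) := by
      rw [stdPdf_mul_stdPdf hτ.ne' hδτ x, mul_comm x δ, ← mul_assoc, mul_inv_cancel₀ hs, one_mul]
    unfold Faux
    field_simp
    linear_combination δ ^ 2 * hk2 -
      (Real.sqrt (2 * Real.pi) * stdPdf x * stdPdf (lam * x / τ)) * hδτ
  unfold Haux
  exact hval ▸ h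

lemma tendsto_Haux_atTop {lam τ δ : ℝ} (hlam : 0 < lam) (hτ : 0 < τ) (hδ : 0 < δ) :
    Tendsto (Haux lam τ δ) atTop (𝓝 (-(δ / Real.sqrt (2 * Real.pi)))) := by
  have hw1 : Tendsto (fun x : ℝ => lam * x / τ) atTop atTop :=
    (tendsto_id.const_mul_atTop hlam).atTop_div_const hτ
  have hw2 : Tendsto (fun x : ℝ => δ * x / τ) atTop atTop :=
    (tendsto_id.const_mul_atTop hδ).atTop_div_const hτ
  have h := ((stdPdf_tendsto_atTop.const_mul lam).mul (stdCdf_tendsto_atTop.comp hw1)).sub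
    ((stdCdf_tendsto_atTop.comp hw2).const_mul (δ / Real.sqrt (2 * Real.pi)))
  unfold Haux
  have h2 : lam * 0 * 1 - δ / Real.sqrt (2 * Real.pi) * 1 = -(δ / Real.sqrt (2 * Real.pi)) := by
    ring
  rw [← h2]
  exact h.congr fun x => by simp [Function.comp]; try ring

lemma tendsto_Haux_atBot {lam τ δ : ℝ} (hlam : 0 < lam) (hτ : 0 < τ) (hδ : 0 < δ) :
    Tendsto (Haux lam τ δ) atBot (𝓝 0) := by
  have hw1 : Tendsto (fun x : ℝ => lam * x / τ) atBot atBot := by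
    apply Tendsto.atBot_div_const hτ
    exact (tendsto_const_mul_atBot_of_pos hlam).2 tendsto_id
  have hw2 : Tendsto (fun x : ℝ => δ * x / τ) atBot atBot := by
    apply Tendsto.atBot_div_const hτ
    exact (tendsto_const_mul_atBot_of_pos hδ).2 tendsto_id
  have h := ((stdPdf_tendsto_atBot.const_mul lam).mul (stdCdf_tendsto_atBot.comp hw1)).sub
    ((stdCdf_tendsto_atBot.comp hw2).const_mul (δ / Real.sqrt (2 * Real.pi)))
  unfold Haux
  have h2 : lam * 0 * 0 - δ / Real.sqrt (2 * Real.pi) * 0 = 0 := by ring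
  rw [← h2]
  exact h.congr fun x => by simp [Function.comp]; try ring

lemma continuous_Faux (lam τ : ℝ) : Continuous (Faux lam τ) := by
  unfold Faux
  continuity

lemma integrable_stdPdf_mul_Faux {lam τ : ℝ} (hlam : 0 < lam) (hτ : 0 < τ) :
    Integrable (fun x => stdPdf x * Faux lam τ x) := by
  apply Integrable.mono'
    (g := fun x => τ * (Real.sqrt (2 * Real.pi))⁻¹ * stdPdf x + lam * (|x| * stdPdf x))
  · exact (integrable_stdPdf.const_mul _).add (integrable_abs_mul_stdPdf.const_mul lam)
  · exact (continuous_stdPdf.mul (continuous_Faux lam τ)).aestronglyMeasurable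
  · refine ae_of_all _ fun x => ?_
    rw [Real.norm_eq_abs, abs_mul, abs_of_pos (stdPdf_pos x)]
    have h1 : |Faux lam τ x| ≤ τ * (Real.sqrt (2 * Real.pi))⁻¹ + lam * |x| := by
      unfold Faux
      have e1 : (0:ℝ) ≤ stdPdf (lam * x / τ) := (stdPdf_pos _).le
      have e2 := stdPdf_le (lam * x / τ)
      have e3 := stdCdf_nonneg (lam * x / τ)
      have e4 := stdCdf_le_one (lam * x / τ)
      have t1 : τ * stdPdf (lam * x / τ) ≤ τ * (Real.sqrt (2 * Real.pi))⁻¹ :=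
        mul_le_mul_of_nonneg_left e2 hτ.le
      have t2 : x * stdCdf (lam * x / τ) ≤ |x| := by
        calc x * stdCdf (lam * x / τ) ≤ |x| * stdCdf (lam * x / τ) :=
              mul_le_mul_of_nonneg_right (le_abs_self x) e3
          _ ≤ |x| * 1 := mul_le_mul_of_nonneg_left e4 (abs_nonneg x)
          _ = |x| := mul_one _
      have t3 : -|x| ≤ x * stdCdf (lam * x / τ) := by
        calc -|x| = -|x| * 1 := by ring
          _ ≤ -|x| * stdCdf (lam * x / τ) := by
              apply mul_le_mul_of_nonpos_left e4 (neg_nonpos.2 (abs_nonneg x))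
          _ ≤ x * stdCdf (lam * x / τ) :=
              mul_le_mul_of_nonneg_right (neg_abs_le x) e3
      rw [abs_le]
      constructor
      · have : (0:ℝ) ≤ τ * stdPdf (lam * x / τ) := mul_nonneg hτ.le e1
        have h5 : lam * (x * stdCdf (lam * x / τ)) ≤ lam * |x| :=
          mul_le_mul_of_nonneg_left t2 hlam.le
        have h6 : (0:ℝ) ≤ τ * (Real.sqrt (2 * Real.pi))⁻¹ := by positivity
        nlinarith
      · have h5 : lam * (-|x|) ≤ lam * (x * stdCdf (lam * x / τ)) :=
          mul_le_mul_of_nonneg_left t3 hlam.le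
        nlinarith
    have h2 : (0:ℝ) < stdPdf x := stdPdf_pos x
    have h3 := mul_le_mul_of_nonneg_left h1 h2.le
    nlinarith

lemma integral_Ioi_stdPdf_Faux {lam τ δ : ℝ} (hlam : 0 < lam) (hτ : 0 < τ) (hδ : 0 < δ)
    (hδτ : δ ^ 2 = lam ^ 2 + τ ^ 2) (u : ℝ) :
    ∫ x in Ioi u, stdPdf x * Faux lam τ x =
      -(δ / Real.sqrt (2 * Real.pi)) - Haux lam τ δ u :=
  integral_Ioi_of_hasDerivAt_of_tendsto' (fun x _ => hasDerivAt_Haux hτ hδτ x)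
    (integrable_stdPdf_mul_Faux hlam hτ).integrableOn (tendsto_Haux_atTop hlam hτ hδ)

lemma integral_stdPdf_Faux {lam τ δ : ℝ} (hlam : 0 < lam) (hτ : 0 < τ) (hδ : 0 < δ)
    (hδτ : δ ^ 2 = lam ^ 2 + τ ^ 2) :
    ∫ x, stdPdf x * Faux lam τ x = -(δ / Real.sqrt (2 * Real.pi)) := by
  have hi := integrable_stdPdf_mul_Faux hlam hτ
  rw [← intervalIntegral.integral_Iic_add_Ioi (b := 0) hi.integrableOn hi.integrableOn,
    integral_Iic_of_hasDerivAt_of_tendsto' (fun x _ => hasDerivAt_Haux hτ hδτ x)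
      hi.integrableOn (tendsto_Haux_atBot hlam hτ hδ),
    integral_Ioi_stdPdf_Faux hlam hτ hδ hδτ 0]
  ring

-- inner integrand over y, for fixed x (with a = lam * x)
lemma inner_ite_eq_indicator (a : ℝ) (τ : ℝ) :
    (fun y => y * (if y < 0 then (1:ℝ) else 0) * (τ⁻¹ * stdPdf ((y + a) / τ))) =
      Set.indicator (Iio 0) (fun y => y * (τ⁻¹ * stdPdf ((y + a) / τ))) := by
  funext y
  by_cases h : y < 0 <;> simp [Set.indicator, h]

lemma inner_integrable (a : ℝ) {τ : ℝ} (hτ : 0 < τ) :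
    Integrable (fun y => y * (if y < 0 then (1:ℝ) else 0) * (τ⁻¹ * stdPdf ((y + a) / τ))) := by
  rw [inner_ite_eq_indicator]
  apply Integrable.indicator _ measurableSet_Iio
  have h := (integrable_mul_comp_affine a hτ).const_mul τ⁻¹
  exact h.congr (ae_of_all _ fun y => by simp only; ring)

lemma inner_value (a : ℝ) {τ : ℝ} (hτ : 0 < τ) :
    ∫ y, y * (if y < 0 then (1:ℝ) else 0) * (τ⁻¹ * stdPdf ((y + a) / τ)) =
      -(τ * stdPdf (a / τ)) - a * stdCdf (a / τ) := by
  rw [inner_ite_eq_indicator, integral_indicator measurableSet_Iio,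
    ← integral_Iic_eq_integral_Iio]
  exact inner_integral a hτ

lemma inner_norm_value (a : ℝ) {τ : ℝ} (hτ : 0 < τ) :
    ∫ y, ‖y * (if y < 0 then (1:ℝ) else 0) * (τ⁻¹ * stdPdf ((y + a) / τ))‖ =
      -(-(τ * stdPdf (a / τ)) - a * stdCdf (a / τ)) := by
  rw [← inner_value a hτ, ← integral_neg]
  congr 1
  funext y
  rw [Real.norm_eq_abs]
  by_cases h : y < 0
  · rw [abs_of_nonpos]
    have h1 : (0:ℝ) < τ⁻¹ * stdPdf ((y + a) / τ) := mul_pos (inv_pos.2 hτ) (stdPdf_pos _)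
    simp only [if_pos h, mul_one]
    nlinarith
  · simp [h]

lemma twoD_integrable {lam τ : ℝ} (hlam : 0 < lam) (hτ : 0 < τ) {c : ℝ → ℝ}
    (hc : Measurable c) (hc0 : ∀ x, 0 ≤ c x) (hc1 : ∀ x, c x ≤ 1) :
    Integrable (fun v : ℝ × ℝ => v.2 * (if v.2 < 0 then (1:ℝ) else 0) * c v.1 *
      (stdPdf v.1 * (τ⁻¹ * stdPdf ((v.2 + lam * v.1) / τ)))) (volume.prod volume) := by
  have hmeas : AEStronglyMeasurable (fun v : ℝ × ℝ => v.2 * (if v.2 < 0 then (1:ℝ) else 0) *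
      c v.1 * (stdPdf v.1 * (τ⁻¹ * stdPdf ((v.2 + lam * v.1) / τ)))) (volume.prod volume) := by
    apply Measurable.aestronglyMeasurable
    apply Measurable.mul
    apply Measurable.mul
    apply Measurable.mul
    · exact measurable_snd
    · exact Measurable.ite (measurableSet_lt measurable_snd measurable_const)
        measurable_const measurable_const
    · exact hc.comp measurable_fst
    · apply Measurable.mul
      · exact continuous_stdPdf.measurable.comp measurable_fst
      · apply Measurable.const_mul
        apply continuous_stdPdf.measurable.comp
        exact ((measurable_snd.add (measurable_fst.const_mul lam)).div_const τ)
  rw [integrable_prod_iff hmeas]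
  constructor
  · refine ae_of_all _ fun x => ?_
    have h := (inner_integrable (lam * x) hτ).const_mul (c x * stdPdf x)
    refine h.congr (ae_of_all _ fun y => ?_)
    simp only
    ring
  · have hval : (fun x : ℝ => ∫ y, ‖y * (if y < 0 then (1:ℝ) else 0) * c x *
        (stdPdf x * (τ⁻¹ * stdPdf ((y + lam * x) / τ)))‖)
        = fun x => c x * stdPdf x * (-(Faux lam τ x)) := by
      funext x
      have h1 : (fun y : ℝ => ‖y * (if y < 0 then (1:ℝ) else 0) * c x *
          (stdPdf x * (τ⁻¹ * stdPdf ((y + lam * x) / τ)))‖)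
          = fun y => (c x * stdPdf x) *
            ‖y * (if y < 0 then (1:ℝ) else 0) * (τ⁻¹ * stdPdf ((y + lam * x) / τ))‖ := by
        funext y
        rw [show y * (if y < 0 then (1:ℝ) else 0) * c x *
          (stdPdf x * (τ⁻¹ * stdPdf ((y + lam * x) / τ))) = (c x * stdPdf x) *
          (y * (if y < 0 then (1:ℝ) else 0) * (τ⁻¹ * stdPdf ((y + lam * x) / τ))) by ring]
        rw [norm_mul, Real.norm_of_nonneg (mul_nonneg (hc0 x) (stdPdf_pos x).le)]
      rw [h1, MeasureTheory.integral_const_mul, inner_norm_value (lam * x) hτ]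
      unfold Faux
      rfl
    have hbound : Integrable (fun x => c x * stdPdf x * (-(Faux lam τ x))) := by
      apply Integrable.mono' (integrable_stdPdf_mul_Faux hlam hτ).abs
      · apply Measurable.aestronglyMeasurable
        exact ((hc.mul continuous_stdPdf.measurable).mul
          ((continuous_Faux lam τ).measurable.neg))
      · refine ae_of_all _ fun x => ?_
        rw [Real.norm_eq_abs, abs_mul, abs_mul, abs_neg,
          abs_of_nonneg (hc0 x), abs_of_pos (stdPdf_pos x), abs_mul,
          abs_of_pos (stdPdf_pos x)]
        have := abs_nonneg (Faux lam τ x)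
        have := stdPdf_pos x
        nlinarith [hc1 x, hc0 x, mul_nonneg (stdPdf_pos x).le (abs_nonneg (Faux lam τ x))]
    exact hval ▸ hbound

lemma twoD_value {lam τ : ℝ} (hlam : 0 < lam) (hτ : 0 < τ) {c : ℝ → ℝ}
    (hc : Measurable c) (hc0 : ∀ x, 0 ≤ c x) (hc1 : ∀ x, c x ≤ 1) :
    (∫ v : ℝ × ℝ, v.2 * (if v.2 < 0 then (1:ℝ) else 0) * c v.1 *
      (stdPdf v.1 * (τ⁻¹ * stdPdf ((v.2 + lam * v.1) / τ)))) =
    ∫ x, c x * (stdPdf x * Faux lam τ x) := by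
  rw [Measure.volume_eq_prod,
    MeasureTheory.integral_prod _ (twoD_integrable hlam hτ hc hc0 hc1)]
  congr 1
  funext x
  have h1 : (fun y : ℝ => y * (if y < 0 then (1:ℝ) else 0) * c x *
      (stdPdf x * (τ⁻¹ * stdPdf ((y + lam * x) / τ))))
      = fun y => (c x * stdPdf x) *
        (y * (if y < 0 then (1:ℝ) else 0) * (τ⁻¹ * stdPdf ((y + lam * x) / τ))) := by
    funext y
    ring
  rw [h1, MeasureTheory.integral_const_mul, inner_value (lam * x) hτ]
  unfold Faux
  ring

lemma binorm_eq {lam δ τ : ℝ} (hδ : 0 < δ) (hτ : 0 < τ)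
    (hτ2 : τ ^ 2 = δ ^ 2 - lam ^ 2) (x y : ℝ) :
    binormDensity !![1, -lam; -lam, δ ^ 2] x y =
      stdPdf x * (τ⁻¹ * stdPdf ((y + lam * x) / τ)) := by
  have hdet : (!![1, -lam; -lam, δ ^ 2] : Matrix (Fin 2) (Fin 2) ℝ).det = τ ^ 2 := by
    rw [Matrix.det_fin_two_of]
    linarith [hτ2]
  have hτ2ne : τ ^ 2 ≠ 0 := by positivity
  have hq : ![x, y] ⬝ᵥ (!![1, -lam; -lam, δ ^ 2] : Matrix (Fin 2) (Fin 2) ℝ)⁻¹.mulVec ![x, y]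
      = (δ ^ 2 * x ^ 2 + 2 * lam * x * y + y ^ 2) / τ ^ 2 := by
    rw [Matrix.inv_def, Matrix.adjugate_fin_two, hdet, Ring.inverse_eq_inv']
    simp [Matrix.mulVec, dotProduct, Fin.sum_univ_two]
    field_simp
    ring
  unfold binormDensity
  rw [hq, hdet, Real.sqrt_sq hτ.le]
  unfold stdPdf
  have hexp : Real.exp (-x ^ 2 / 2) * Real.exp (-((y + lam * x) / τ) ^ 2 / 2) =
      Real.exp (-((δ ^ 2 * x ^ 2 + 2 * lam * x * y + y ^ 2) / τ ^ 2) / 2) := by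
    rw [← Real.exp_add]
    congr 1
    field_simp
    linear_combination (-x ^ 2) * hτ2
  have hc : (Real.sqrt (2 * Real.pi))⁻¹ * (Real.sqrt (2 * Real.pi))⁻¹ = (2 * Real.pi)⁻¹ := by
    rw [← mul_inv, Real.mul_self_sqrt (by positivity)]
  calc (2 * Real.pi)⁻¹ * τ⁻¹ *
        Real.exp (-((δ ^ 2 * x ^ 2 + 2 * lam * x * y + y ^ 2) / τ ^ 2) / 2)
      = (2 * Real.pi)⁻¹ * τ⁻¹ *
        (Real.exp (-x ^ 2 / 2) * Real.exp (-((y + lam * x) / τ) ^ 2 / 2)) := by rw [hexp]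
    _ = _ := by rw [← hc]; ring

theorem stmt_1 (lam δ : ℝ) (hlam : 0 < lam) (hδ : 0 < δ) (hlt : lam < δ) (u : ℝ) :
    (∫ v : ℝ × ℝ,
        v.2 * (if v.2 < 0 then (1 : ℝ) else 0) * (if v.1 > u then (1 : ℝ) else 0) *
          binormDensity !![1, -lam; -lam, δ ^ 2] v.1 v.2) /
      (∫ v : ℝ × ℝ,
        v.2 * (if v.2 < 0 then (1 : ℝ) else 0) *
          binormDensity !![1, -lam; -lam, δ ^ 2] v.1 v.2) =
    stdTail (u / Real.sqrt (1 - (-lam / δ) ^ 2)) -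
      Real.sqrt (2 * Real.pi) * (-lam / δ) * stdPdf u *
        stdCdf (-(-lam / δ) * u / Real.sqrt (1 - (-lam / δ) ^ 2)) := by
  set τ := Real.sqrt (δ ^ 2 - lam ^ 2) with hτdef
  have hpos : 0 < δ ^ 2 - lam ^ 2 := by nlinarith
  have hτ : 0 < τ := Real.sqrt_pos.2 hpos
  have hτ2 : τ ^ 2 = δ ^ 2 - lam ^ 2 := Real.sq_sqrt hpos.le
  have hδτ : δ ^ 2 = lam ^ 2 + τ ^ 2 := by linarith
  have hbd : ∀ x y : ℝ, binormDensity !![1, -lam; -lam, δ ^ 2] x y =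
      stdPdf x * (τ⁻¹ * stdPdf ((y + lam * x) / τ)) := binorm_eq hδ hτ hτ2
  have hcmeas : Measurable (fun x : ℝ => if x > u then (1:ℝ) else 0) :=
    Measurable.ite (measurableSet_lt measurable_const measurable_id)
      measurable_const measurable_const
  have hc0 : ∀ x : ℝ, 0 ≤ (if x > u then (1:ℝ) else 0) := fun x => by positivity
  have hc1 : ∀ x : ℝ, (if x > u then (1:ℝ) else 0) ≤ 1 := fun x => by
    by_cases h : x > u <;> simp [h]
  have hnum : (∫ v : ℝ × ℝ,
      v.2 * (if v.2 < 0 then (1 : ℝ) else 0) * (if v.1 > u then (1 : ℝ) else 0) *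
        binormDensity !![1, -lam; -lam, δ ^ 2] v.1 v.2)
      = -(δ / Real.sqrt (2 * Real.pi)) - Haux lam τ δ u := by
    have h0 : (∫ v : ℝ × ℝ,
        v.2 * (if v.2 < 0 then (1 : ℝ) else 0) * (if v.1 > u then (1 : ℝ) else 0) *
          binormDensity !![1, -lam; -lam, δ ^ 2] v.1 v.2)
        = ∫ v : ℝ × ℝ, v.2 * (if v.2 < 0 then (1 : ℝ) else 0) *
          ((fun x : ℝ => if x > u then (1:ℝ) else 0) v.1) *
          (stdPdf v.1 * (τ⁻¹ * stdPdf ((v.2 + lam * v.1) / τ))) := by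
      congr 1
      funext v
      rw [hbd v.1 v.2]
    rw [h0, twoD_value hlam hτ hcmeas hc0 hc1]
    have h1 : (fun x : ℝ => (fun x : ℝ => if x > u then (1:ℝ) else 0) x *
        (stdPdf x * Faux lam τ x))
        = Set.indicator (Ioi u) (fun x => stdPdf x * Faux lam τ x) := by
      funext x
      by_cases h : x > u <;> simp [Set.indicator, h, mem_Ioi]
    rw [h1, integral_indicator measurableSet_Ioi,
      integral_Ioi_stdPdf_Faux hlam hτ hδ hδτ u]
  have hden : (∫ v : ℝ × ℝ,
      v.2 * (if v.2 < 0 then (1 : ℝ) else 0) *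
        binormDensity !![1, -lam; -lam, δ ^ 2] v.1 v.2)
      = -(δ / Real.sqrt (2 * Real.pi)) := by
    have h0 : (∫ v : ℝ × ℝ,
        v.2 * (if v.2 < 0 then (1 : ℝ) else 0) *
          binormDensity !![1, -lam; -lam, δ ^ 2] v.1 v.2)
        = ∫ v : ℝ × ℝ, v.2 * (if v.2 < 0 then (1 : ℝ) else 0) *
          ((fun _ : ℝ => (1:ℝ)) v.1) *
          (stdPdf v.1 * (τ⁻¹ * stdPdf ((v.2 + lam * v.1) / τ))) := by
      congr 1
      funext v
      rw [hbd v.1 v.2]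
      ring
    rw [h0, twoD_value hlam hτ measurable_const (fun _ => zero_le_one) (fun _ => le_refl 1)]
    simp only [one_mul]
    exact integral_stdPdf_Faux hlam hτ hδ hδτ
  rw [hnum, hden]
  have hsq : Real.sqrt (1 - (-lam / δ) ^ 2) = τ / δ := by
    have h1 : 1 - (-lam / δ) ^ 2 = (τ / δ) ^ 2 := by
      rw [div_pow, div_pow, hτ2]
      field_simp
    rw [h1, Real.sqrt_sq (by positivity)]
  rw [hsq]
  have e1 : u / (τ / δ) = δ * u / τ := by
    field_simp
  have e2 : -(-lam / δ) * u / (τ / δ) = lam * u / τ := by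
    field_simp
  rw [e1, e2]
  have hs : Real.sqrt (2 * Real.pi) ≠ 0 := sqrt2pi_pos.ne'
  unfold Haux stdTail
  field_simp
  ring
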